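/- (Quadratic growth) Suppose X* ∈ F_{n,k} is an optimal solution of min_{X∈F_{n,k}} f(X) satisfying the eigen-gap assumption with parameter δ > 0. Then for every X ∈ F_{n,k}: ‖X − X*‖_F² ≤ (2/δ)·(f(X) − f(X*)). -/

import Mathlib

open Matrix

noncomputable def frobNorm {m : ℕ} (A : Matrix (Fin m) (Fin m) ℝ) : ℝ :=
  Real.sqrt (∑ i, ∑ j, (A i j) ^ 2)

/-- `eigval A j` is the `j`-th largest eigenvalue (1-indexed) of the symmetric matrix `A`. -/
noncomputable def eigval {m : ℕ} (A : Matrix (Fin m) (Fin m) ℝ) (j : ℕ) : ℝ :=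
  if h : A.IsHermitian then
    if hj : m - j < m then (h.eigenvalues ∘ Tuple.sort h.eigenvalues) ⟨m - j, hj⟩ else 0
  else 0

/-- spectral norm: largest singular value. -/
noncomputable def specNorm {m : ℕ} (A : Matrix (Fin m) (Fin m) ℝ) : ℝ :=
  Real.sqrt (eigval (Aᵀ * A) 1)

/-- `P_{n,k}`: rank-`k` orthogonal projection matrices. -/
def ProjSet (n k : ℕ) : Set (Matrix (Fin n) (Fin n) ℝ) :=
  {X | ∃ Q : Matrix (Fin n) (Fin k) ℝ, Qᵀ * Q = 1 ∧ X = Q * Qᵀ}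

/-- The Fantope `F_{n,k}`. -/
def Fantope (n k : ℕ) : Set (Matrix (Fin n) (Fin n) ℝ) :=
  {X | X.IsSymm ∧ X.PosSemidef ∧ (1 - X).PosSemidef ∧ X.trace = (k : ℝ)}

/- ========= auxiliary lemmas ========= -/

lemma frobNorm_nonneg {m : ℕ} (A : Matrix (Fin m) (Fin m) ℝ) : 0 ≤ frobNorm A :=
  Real.sqrt_nonneg _

lemma frobNorm_sq {m : ℕ} (A : Matrix (Fin m) (Fin m) ℝ) :
    frobNorm A ^ 2 = ∑ i, ∑ j, (A i j) ^ 2 := by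
  rw [frobNorm, Real.sq_sqrt]
  exact Finset.sum_nonneg fun i _ => Finset.sum_nonneg fun j _ => sq_nonneg _

lemma frobNorm_eq_zero {m : ℕ} {A : Matrix (Fin m) (Fin m) ℝ} (h : frobNorm A ^ 2 ≤ 0) :
    A = 0 := by
  rw [frobNorm_sq] at h
  have h2 : ∀ i ∈ Finset.univ, ∀ j ∈ Finset.univ, (A i j)^2 = 0 := by
    have := Finset.sum_eq_zero_iff_of_nonneg (fun i _ => Finset.sum_nonneg fun j _ => sq_nonneg (A i j)) |>.mp
      (le_antisymm h (Finset.sum_nonneg fun i _ => Finset.sum_nonneg fun j _ => sq_nonneg _))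
    intro i hi j hj
    exact (Finset.sum_eq_zero_iff_of_nonneg (fun j _ => sq_nonneg _)).mp (this i hi) j hj
  ext i j
  simpa using pow_eq_zero_iff (n := 2) (by norm_num) |>.mp (h2 i (by simp) j (by simp))

lemma frobNorm_smul {m : ℕ} (t : ℝ) (ht : 0 ≤ t) (A : Matrix (Fin m) (Fin m) ℝ) :
    frobNorm (t • A) = t * frobNorm A := by
  unfold frobNorm
  rw [← Real.sqrt_sq ht, ← Real.sqrt_mul (sq_nonneg t), Finset.mul_sum]
  congr 1
  refine Finset.sum_congr rfl fun i _ => ?_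
  rw [Finset.mul_sum]
  refine Finset.sum_congr rfl fun j _ => ?_
  simp only [Matrix.smul_apply, smul_eq_mul, mul_pow, Real.sq_sqrt (sq_nonneg t)]

lemma frobNorm_neg {m : ℕ} (A : Matrix (Fin m) (Fin m) ℝ) : frobNorm (-A) = frobNorm A := by
  unfold frobNorm
  congr 1
  exact Finset.sum_congr rfl fun i _ => Finset.sum_congr rfl fun j _ => by
    simp [Matrix.neg_apply]

/-- Cauchy–Schwarz for matrices entrywise. -/
lemma frob_cauchy {m : ℕ} (A B : Matrix (Fin m) (Fin m) ℝ) :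
    -(frobNorm A * frobNorm B) ≤ ∑ i, ∑ j, A i j * B i j := by
  have h := Finset.sum_mul_sq_le_sq_mul_sq Finset.univ (fun p : Fin m × Fin m => A p.1 p.2)
    (fun p : Fin m × Fin m => B p.1 p.2)
  have e1 : (∑ p : Fin m × Fin m, A p.1 p.2 * B p.1 p.2) = ∑ i, ∑ j, A i j * B i j :=
    Fintype.sum_prod_type _
  have e2 : (∑ p : Fin m × Fin m, A p.1 p.2 ^ 2) = frobNorm A ^ 2 := by
    rw [frobNorm_sq]; exact Fintype.sum_prod_type _
  have e3 : (∑ p : Fin m × Fin m, B p.1 p.2 ^ 2) = frobNorm B ^ 2 := by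
    rw [frobNorm_sq]; exact Fintype.sum_prod_type _
  rw [e1, e2, e3] at h
  set S := ∑ i, ∑ j, A i j * B i j
  have habs : |S| ≤ frobNorm A * frobNorm B := by
    have : S ^ 2 ≤ (frobNorm A * frobNorm B) ^ 2 := by rw [mul_pow]; exact h
    calc |S| = Real.sqrt (S ^ 2) := (Real.sqrt_sq_eq_abs S).symm
    _ ≤ Real.sqrt ((frobNorm A * frobNorm B) ^ 2) := Real.sqrt_le_sqrt this
    _ = frobNorm A * frobNorm B := Real.sqrt_sq (mul_nonneg (frobNorm_nonneg A) (frobNorm_nonneg B))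
  linarith [neg_abs_le S]

lemma psd_diag_nonneg {m : ℕ} {A : Matrix (Fin m) (Fin m) ℝ} (hA : A.PosSemidef) (i : Fin m) :
    0 ≤ A i i := by
  have := hA.dotProduct_mulVec_nonneg (Pi.single i 1)
  simpa [dotProduct, mulVec, Pi.single_apply] using this

lemma psd_trace_nonneg {m : ℕ} {A : Matrix (Fin m) (Fin m) ℝ} (hA : A.PosSemidef) :
    0 ≤ A.trace :=
  Finset.sum_nonneg fun i _ => psd_diag_nonneg hA i

lemma psd_trace_mul_nonneg {m : ℕ} {A B : Matrix (Fin m) (Fin m) ℝ}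
    (hA : A.PosSemidef) (hB : B.PosSemidef) : 0 ≤ (A * B).trace := by
  open scoped MatrixOrder Matrix.Norms.L2Operator in
    obtain ⟨C, hC⟩ := CStarAlgebra.nonneg_iff_eq_star_mul_self.mp hA.nonneg
  rw [Matrix.star_eq_conjTranspose] at hC
  have h1 : (A * B).trace = (C * B * Cᴴ).trace := by
    rw [hC, Matrix.trace_mul_comm, ← Matrix.mul_assoc, Matrix.trace_mul_comm, Matrix.mul_assoc]
  rw [h1]
  exact psd_trace_nonneg (hB.mul_mul_conjTranspose_same C)

lemma smul_psd {m : ℕ} {A : Matrix (Fin m) (Fin m) ℝ} (hA : A.PosSemidef) {t : ℝ} (ht : 0 ≤ t) :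
    (t • A).PosSemidef := by
  refine .of_dotProduct_mulVec_nonneg ?_ fun x => ?_
  · unfold Matrix.IsHermitian
    rw [Matrix.conjTranspose_smul, hA.1]
    simp
  · rw [Matrix.smul_mulVec, dotProduct_smul]
    exact mul_nonneg ht (hA.dotProduct_mulVec_nonneg x)

lemma trace_mul_symm {m : ℕ} (A B : Matrix (Fin m) (Fin m) ℝ) (hB : B.IsSymm) :
    (A * B).trace = ∑ i, ∑ j, A i j * B i j := by
  rw [Matrix.trace]
  refine Finset.sum_congr rfl fun i _ => ?_
  rw [Matrix.diag_apply, Matrix.mul_apply]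
  refine Finset.sum_congr rfl fun j _ => ?_
  conv_lhs => rw [← hB]
  rw [Matrix.transpose_apply]

lemma sum_ite_lt_k {n k : ℕ} (hkn : k ≤ n) :
    (∑ i : Fin n, (if (i : ℕ) < k then (1:ℝ) else 0)) = k := by
  rw [Fin.sum_univ_eq_sum_range (fun i => if i < k then (1:ℝ) else 0)]
  have : ∀ m : ℕ, (∑ i ∈ Finset.range m, if i < k then (1:ℝ) else 0) = min m k := by
    intro m
    induction m with
    | zero => simp
    | succ m ih =>
      rw [Finset.sum_range_succ, ih]
      rcases Nat.lt_or_ge m k with h | h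
      · rw [if_pos h]
        have h1 : min m k = m := by omega
        have h2 : min (m+1) k = m + 1 := by omega
        rw [h1, h2]; push_cast; ring
      · rw [if_neg (by omega)]
        have h1 : min m k = k := by omega
        have h2 : min (m+1) k = k := by omega
        rw [h1, h2, add_zero]
  rw [this n]
  have : min n k = k := by omega
  rw [this]

lemma isHermitian_of_isSymm {m : ℕ} {A : Matrix (Fin m) (Fin m) ℝ} (h : A.IsSymm) :
    A.IsHermitian := by
  rw [Matrix.IsHermitian, Matrix.conjTranspose_eq_transpose_of_trivial]; exact h

lemma eigval_sorted {m : ℕ} {A : Matrix (Fin m) (Fin m) ℝ} (h : A.IsHermitian) {j i : ℕ}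
    (hi : i < m) (hij : m - j = i) :
    eigval A j = (h.eigenvalues ∘ Tuple.sort h.eigenvalues) ⟨i, hi⟩ := by
  subst hij
  rw [eigval, dif_pos h, dif_pos hi]

lemma spectral_sorted {m : ℕ} {G : Matrix (Fin m) (Fin m) ℝ} (hG : G.IsHermitian) :
    ∃ V : Matrix (Fin m) (Fin m) ℝ, Vᵀ * V = 1 ∧ V * Vᵀ = 1 ∧
      G = V * Matrix.diagonal (hG.eigenvalues ∘ ⇑(Tuple.sort hG.eigenvalues)) * Vᵀ := by
  set σ := Tuple.sort hG.eigenvalues with hσ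
  set U : Matrix (Fin m) (Fin m) ℝ := (Matrix.IsHermitian.eigenvectorUnitary hG : Matrix (Fin m) (Fin m) ℝ) with hUdef
  have hUmem := (Matrix.mem_unitaryGroup_iff).mp (Matrix.IsHermitian.eigenvectorUnitary hG).2
  have hUmem' := (Matrix.mem_unitaryGroup_iff').mp (Matrix.IsHermitian.eigenvectorUnitary hG).2
  have hstar : star U = Uᵀ := by
    rw [Matrix.star_eq_conjTranspose, Matrix.conjTranspose_eq_transpose_of_trivial]
  have hUU : Uᵀ * U = 1 := by rw [← hstar]; exact hUmem'
  have hUU' : U * Uᵀ = 1 := by rw [← hstar]; exact hUmem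
  refine ⟨U.submatrix id ⇑σ, ?_, ?_, ?_⟩
  · have h1 := Matrix.submatrix_mul_equiv Uᵀ U ⇑σ (Equiv.refl (Fin m)) ⇑σ
    simp only [Equiv.coe_refl] at h1
    rw [Matrix.transpose_submatrix, h1, hUU, Matrix.submatrix_one_equiv]
  · rw [mul_eq_one_comm]
    have h1 := Matrix.submatrix_mul_equiv Uᵀ U ⇑σ (Equiv.refl (Fin m)) ⇑σ
    simp only [Equiv.coe_refl] at h1
    rw [Matrix.transpose_submatrix, h1, hUU, Matrix.submatrix_one_equiv]
  · have hspec := Matrix.IsHermitian.spectral_theorem hG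
    rw [RCLike.ofReal_real_eq_id] at hspec
    simp only [Function.id_comp] at hspec
    have hdiag : Matrix.diagonal (hG.eigenvalues ∘ ⇑σ)
        = (Matrix.diagonal hG.eigenvalues).submatrix ⇑σ ⇑σ := by
      rw [Matrix.submatrix_diagonal_equiv]
    rw [hdiag, Matrix.transpose_submatrix]
    have h1 := Matrix.submatrix_mul_equiv U (Matrix.diagonal hG.eigenvalues) id σ ⇑σ
    rw [h1]
    have h2 := Matrix.submatrix_mul_equiv (U * Matrix.diagonal hG.eigenvalues) Uᵀ id σ id
    have h3 : (U * Matrix.diagonal hG.eigenvalues).submatrix id ⇑σ * Uᵀ.submatrix (⇑σ) id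
        = U * Matrix.diagonal hG.eigenvalues * Uᵀ := h2.trans (Matrix.submatrix_id_id _)
    rw [h3]
    rw [Unitary.conjStarAlgAut_apply] at hspec
    rw [← hUdef, hstar] at hspec
    exact hspec

lemma key_coord {n k : ℕ} (hk : 0 < k) (hkn : k < n) (μ y : Fin n → ℝ) (hμ : Monotone μ)
    (hy0 : ∀ i, 0 ≤ y i) (hy1 : ∀ i, y i ≤ 1) (hsum : ∑ i, y i = k)
    {δ : ℝ} (hδ : 0 ≤ δ)
    (hgap : δ ≤ μ ⟨k, hkn⟩ - μ ⟨k-1, by omega⟩) :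
    δ * ((k:ℝ) - ∑ i : Fin n, (if (i:ℕ) < k then (1:ℝ) else 0) * y i)
      ≤ (∑ i : Fin n, μ i * y i) - ∑ i : Fin n, μ i * (if (i:ℕ) < k then (1:ℝ) else 0) := by
  classical
  set d : Fin n → ℝ := fun i => if (i:ℕ) < k then (1:ℝ) else 0 with hd
  set a : Fin n := ⟨k-1, by omega⟩
  set b : Fin n := ⟨k, hkn⟩
  set t := ∑ i, d i * y i with hT
  have hdsum : ∑ i, d i = k := sum_ite_lt_k (le_of_lt hkn)
  have hpt : ∀ i ∈ Finset.univ, μ a * (d i * y i - d i) + μ b * (y i - d i * y i)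
      ≤ μ i * y i - μ i * d i := by
    intro i _
    by_cases hi : (i:ℕ) < k
    · have hdi : d i = 1 := by simp [hd, hi]
      have hia : i ≤ a := by
        apply Fin.mk_le_of_le_val
        simp only [a]
        omega
      have h1 : μ i ≤ μ a := hμ hia
      have h2 : y i - 1 ≤ 0 := by linarith [hy1 i]
      rw [hdi]
      nlinarith
    · have hdi : d i = 0 := by simp [hd, hi]
      have hbi : b ≤ i := by
        apply Fin.mk_le_of_le_val
        omega
      have h1 : μ b ≤ μ i := hμ hbi
      rw [hdi]
      nlinarith [hy0 i]
  have hsum2 := Finset.sum_le_sum hpt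
  have hL : ∑ i, (μ a * (d i * y i - d i) + μ b * (y i - d i * y i))
      = μ a * (t - k) + μ b * ((k:ℝ) - t) := by
    rw [Finset.sum_add_distrib, ← Finset.mul_sum, ← Finset.mul_sum,
      Finset.sum_sub_distrib, Finset.sum_sub_distrib, hdsum, hsum, ← hT]
  have hR : ∑ i, (μ i * y i - μ i * d i) = (∑ i, μ i * y i) - ∑ i, μ i * d i :=
    Finset.sum_sub_distrib _ _
  rw [hL, hR] at hsum2
  have htk : t ≤ (k:ℝ) := by
    rw [hT, ← hdsum]
    refine Finset.sum_le_sum fun i _ => ?_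
    by_cases hi : (i:ℕ) < k <;> simp [hd, hi, hy1 i]
  have hab : μ a ≤ μ b := hμ (Fin.mk_le_mk.mpr (by omega))
  have hfinal : δ * ((k:ℝ) - t) ≤ (∑ i : Fin n, μ i * y i) - ∑ i : Fin n, μ i * d i := by
    nlinarith
  exact hfinal

section Sandwich
variable {n : ℕ} {V : Matrix (Fin n) (Fin n) ℝ}

lemma trace_sandwich (c : Fin n → ℝ) (X : Matrix (Fin n) (Fin n) ℝ) :
    (V * Matrix.diagonal c * Vᵀ * X).trace = ∑ i, c i * (Vᵀ * X * V) i i := by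
  have h1 : V * Matrix.diagonal c * Vᵀ * X = V * (Matrix.diagonal c * (Vᵀ * X)) := by
    simp [Matrix.mul_assoc]
  rw [h1, Matrix.trace_mul_comm, Matrix.mul_assoc, Matrix.trace]
  refine Finset.sum_congr rfl fun i _ => ?_
  rw [Matrix.diag_apply, Matrix.diagonal_mul, Matrix.mul_assoc]

lemma quad_entry (X : Matrix (Fin n) (Fin n) ℝ) (i : Fin n) :
    (Vᵀ * X * V) i i = (fun a => V a i) ⬝ᵥ (X *ᵥ fun a => V a i) := by
  simp only [Matrix.mul_apply, Matrix.transpose_apply, dotProduct, Matrix.mulVec,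
    Finset.sum_mul, Finset.mul_sum]
  rw [Finset.sum_comm]
  refine Finset.sum_congr rfl fun a _ => Finset.sum_congr rfl fun b _ => by ring

lemma quad_bounds (hV : Vᵀ * V = 1) {X : Matrix (Fin n) (Fin n) ℝ}
    (hX : X.PosSemidef) (hX1 : (1 - X).PosSemidef) (i : Fin n) :
    0 ≤ (Vᵀ * X * V) i i ∧ (Vᵀ * X * V) i i ≤ 1 := by
  set v : Fin n → ℝ := fun a => V a i with hv
  have hstar : star v = v := by funext a; simp
  have h0 : 0 ≤ v ⬝ᵥ (X *ᵥ v) := by have := hX.dotProduct_mulVec_nonneg v; rwa [hstar] at this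
  have hvv : v ⬝ᵥ v = 1 := by
    have h := quad_entry (V := V) (1 : Matrix (Fin n) (Fin n) ℝ) i
    rw [Matrix.mul_one, hV, Matrix.one_mulVec] at h
    have : (1 : Matrix (Fin n) (Fin n) ℝ) i i = 1 := by simp
    rw [← h, this]
  have h1 : 0 ≤ v ⬝ᵥ ((1 - X) *ᵥ v) := by have := hX1.dotProduct_mulVec_nonneg v; rwa [hstar] at this
  rw [Matrix.sub_mulVec, dotProduct_sub, Matrix.one_mulVec, hvv] at h1
  rw [quad_entry]
  exact ⟨h0, by linarith⟩

lemma sum_quad (hV' : V * Vᵀ = 1) (X : Matrix (Fin n) (Fin n) ℝ) :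
    ∑ i, (Vᵀ * X * V) i i = X.trace := by
  have : ∑ i, (Vᵀ * X * V) i i = (Vᵀ * X * V).trace := rfl
  rw [this, Matrix.trace_mul_comm, ← Matrix.mul_assoc, hV', Matrix.one_mul]

end Sandwich

lemma frob_sub_sq {m : ℕ} {X P : Matrix (Fin m) (Fin m) ℝ} (hX : X.IsSymm) (hP : P.IsSymm) :
    frobNorm (X - P) ^ 2 = (X * X).trace - 2 * (X * P).trace + (P * P).trace := by
  rw [frobNorm_sq, trace_mul_symm X X hX, trace_mul_symm X P hP, trace_mul_symm P P hP,
    Finset.mul_sum, ← Finset.sum_sub_distrib, ← Finset.sum_add_distrib]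
  refine Finset.sum_congr rfl fun i _ => ?_
  rw [Finset.mul_sum, ← Finset.sum_sub_distrib, ← Finset.sum_add_distrib]
  refine Finset.sum_congr rfl fun j _ => ?_
  simp only [Matrix.sub_apply]
  ring

section Key
variable {n k : ℕ}

def dind (n k : ℕ) : Fin n → ℝ := fun i => if (i:ℕ) < k then 1 else 0

lemma dind_nonneg : 0 ≤ dind n k := fun i => by unfold dind; positivity

lemma dind_le_one : ∀ i, dind n k i ≤ 1 := fun i => by
  unfold dind; split_ifs <;> norm_num

lemma diag_one_sub_dind : Matrix.diagonal (fun i => 1 - dind n k i)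
    = 1 - Matrix.diagonal (dind n k) := by
  ext i j
  by_cases h : i = j <;> simp [Matrix.diagonal_apply, Matrix.one_apply, h]

variable {V : Matrix (Fin n) (Fin n) ℝ} (hV : Vᵀ * V = 1) (hV' : V * Vᵀ = 1)

lemma P_symm : (V * Matrix.diagonal (dind n k) * Vᵀ).IsSymm := by
  rw [Matrix.IsSymm, Matrix.transpose_mul, Matrix.transpose_mul, Matrix.transpose_transpose,
    Matrix.diagonal_transpose, Matrix.mul_assoc]

include hV in
lemma sandwich_V (c : Fin n → ℝ) :
    Vᵀ * (V * Matrix.diagonal c * Vᵀ) * V = Matrix.diagonal c := by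
  simp only [← Matrix.mul_assoc]
  rw [hV, Matrix.one_mul, Matrix.mul_assoc, hV, Matrix.mul_one]

include hV hV' in
lemma P_mem_Fantope (hkn : k ≤ n) :
    V * Matrix.diagonal (dind n k) * Vᵀ ∈ Fantope n k := by
  have hpsd : ∀ c : Fin n → ℝ, 0 ≤ c → (V * Matrix.diagonal c * Vᵀ).PosSemidef := by
    intro c hc
    have := (Matrix.PosSemidef.diagonal (d := c) hc).mul_mul_conjTranspose_same V
    rwa [Matrix.conjTranspose_eq_transpose_of_trivial] at this
  refine ⟨P_symm, hpsd _ dind_nonneg, ?_, ?_⟩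
  · have h1 : 1 - V * Matrix.diagonal (dind n k) * Vᵀ
        = V * Matrix.diagonal (fun i => 1 - dind n k i) * Vᵀ := by
      rw [diag_one_sub_dind, Matrix.mul_sub, Matrix.mul_one, Matrix.sub_mul, hV']
    rw [h1]
    exact hpsd _ (fun i => by have := dind_le_one (n := n) (k := k) i; simp; linarith)
  · rw [Matrix.trace_mul_comm, ← Matrix.mul_assoc, hV, Matrix.one_mul, Matrix.trace_diagonal]
    exact sum_ite_lt_k hkn

include hV hV' in
lemma key_ineq (hk : 0 < k) (hkn : k < n)
    {G : Matrix (Fin n) (Fin n) ℝ} {μ : Fin n → ℝ} (hμ : Monotone μ)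
    (hGspec : G = V * Matrix.diagonal μ * Vᵀ)
    {δ : ℝ} (hδ : 0 ≤ δ) (hgap : δ ≤ μ ⟨k, hkn⟩ - μ ⟨k-1, by omega⟩)
    {X : Matrix (Fin n) (Fin n) ℝ} (hX : X ∈ Fantope n k) :
    δ/2 * frobNorm (X - (V * Matrix.diagonal (dind n k) * Vᵀ)) ^ 2
      ≤ (G * (X - (V * Matrix.diagonal (dind n k) * Vᵀ))).trace := by
  obtain ⟨hXs, hXpsd, hX1psd, hXtr⟩ := hX
  set P := V * Matrix.diagonal (dind n k) * Vᵀ with hP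
  set Y : Fin n → ℝ := fun i => (Vᵀ * X * V) i i with hY
  have hY0 : ∀ i, 0 ≤ Y i := fun i => (quad_bounds hV hXpsd hX1psd i).1
  have hY1 : ∀ i, Y i ≤ 1 := fun i => (quad_bounds hV hXpsd hX1psd i).2
  have hYsum : ∑ i, Y i = (k:ℝ) := by rw [hY]; rw [sum_quad hV' X, hXtr]
  have htGX : (G * X).trace = ∑ i, μ i * Y i := by rw [hGspec]; exact trace_sandwich μ X
  have hPV : Vᵀ * P * V = Matrix.diagonal (dind n k) := sandwich_V hV _
  have htGP : (G * P).trace = ∑ i, μ i * dind n k i := by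
    rw [hGspec, trace_sandwich μ P]
    refine Finset.sum_congr rfl fun i _ => ?_
    rw [hPV, Matrix.diagonal_apply_eq]
  have htXP : (X * P).trace = ∑ i, dind n k i * Y i := by
    rw [Matrix.trace_mul_comm, hP, trace_sandwich (dind n k) X]
  have htPP : (P * P).trace = (k:ℝ) := by
    conv_lhs => rw [hP]
    rw [trace_sandwich (dind n k) P]
    have : ∀ i, dind n k i * (Vᵀ * P * V) i i = dind n k i := by
      intro i
      rw [hPV, Matrix.diagonal_apply_eq]
      unfold dind; split_ifs <;> norm_num
    rw [Finset.sum_congr rfl fun i _ => this i]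
    exact sum_ite_lt_k (le_of_lt hkn)
  have htXX : (X * X).trace ≤ (k:ℝ) := by
    have h0 : 0 ≤ (X * (1 - X)).trace := psd_trace_mul_nonneg hXpsd hX1psd
    rw [Matrix.mul_sub, Matrix.mul_one, Matrix.trace_sub, hXtr] at h0
    linarith
  have hfrob : frobNorm (X - P) ^ 2 ≤ 2 * ((k:ℝ) - ∑ i, dind n k i * Y i) := by
    rw [frob_sub_sq hXs (P_symm), htXP, htPP]
    linarith
  have hkc := key_coord hk hkn μ Y hμ hY0 hY1 hYsum hδ hgap
  have htr : (G * (X - P)).trace = (∑ i, μ i * Y i) - ∑ i, μ i * dind n k i := by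
    rw [Matrix.mul_sub, Matrix.trace_sub, htGX, htGP]
  rw [htr]
  have hs : (0:ℝ) ≤ (k:ℝ) - ∑ i, dind n k i * Y i := by
    have := sq_nonneg (frobNorm (X - P)); linarith
  calc δ/2 * frobNorm (X - P) ^ 2 ≤ δ/2 * (2 * ((k:ℝ) - ∑ i, dind n k i * Y i)) := by
        apply mul_le_mul_of_nonneg_left hfrob; linarith
    _ = δ * ((k:ℝ) - ∑ i, dind n k i * Y i) := by ring
    _ ≤ _ := hkc

end Key

lemma fantope_convex_pt {n k : ℕ} {A B : Matrix (Fin n) (Fin n) ℝ}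
    (hA : A ∈ Fantope n k) (hB : B ∈ Fantope n k) {t : ℝ} (h0 : 0 ≤ t) (h1 : t ≤ 1) :
    A + t • (B - A) ∈ Fantope n k := by
  obtain ⟨hAs, hApsd, hA1, hAtr⟩ := hA
  obtain ⟨hBs, hBpsd, hB1, hBtr⟩ := hB
  have hrw : A + t • (B - A) = (1 - t) • A + t • B := by
    ext i j
    simp only [Matrix.add_apply, Matrix.smul_apply, Matrix.sub_apply, smul_eq_mul]
    ring
  rw [hrw]
  refine ⟨?_, ?_, ?_, ?_⟩
  · rw [Matrix.IsSymm, Matrix.transpose_add, Matrix.transpose_smul, Matrix.transpose_smul,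
      hAs, hBs]
  · exact (smul_psd hApsd (by linarith)).add (smul_psd hBpsd h0)
  · have hrw2 : 1 - ((1-t) • A + t • B) = (1-t) • (1 - A) + t • (1 - B) := by
      ext i j
      by_cases h : i = j <;>
        simp only [Matrix.sub_apply, Matrix.add_apply, Matrix.smul_apply, Matrix.one_apply, h,
          if_true, if_false, smul_eq_mul] <;> ring
    rw [hrw2]
    exact (smul_psd hA1 (by linarith)).add (smul_psd hB1 h0)
  · rw [Matrix.trace_add, Matrix.trace_smul, Matrix.trace_smul, hAtr, hBtr]
    simp only [smul_eq_mul]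
    ring

theorem stmt9 {n k : ℕ} (hk : 0 < k) (hkn : k < n)
    (f : Matrix (Fin n) (Fin n) ℝ → ℝ)
    (grad : Matrix (Fin n) (Fin n) ℝ → Matrix (Fin n) (Fin n) ℝ)
    (β : ℝ) (hβ : 0 < β)
    (hgradSymm : ∀ X : Matrix (Fin n) (Fin n) ℝ, (grad X).IsSymm)
    (hconv : ∀ X Y : Matrix (Fin n) (Fin n) ℝ, X.IsSymm → Y.IsSymm →
      f X + (grad X * (Y - X)).trace ≤ f Y)
    (hsmooth : ∀ X Y : Matrix (Fin n) (Fin n) ℝ, X.IsSymm → Y.IsSymm →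
      frobNorm (grad X - grad Y) ≤ β * frobNorm (X - Y))
    (Xstar : Matrix (Fin n) (Fin n) ℝ)
    (hXstarMem : Xstar ∈ Fantope n k)
    (hXstarOpt : ∀ X ∈ Fantope n k, f Xstar ≤ f X)
    (δ : ℝ) (hδ : 0 < δ)
    (hgap : δ ≤ eigval (grad Xstar) (n - k) - eigval (grad Xstar) (n - k + 1))
    :
    ∀ X ∈ Fantope n k,
      frobNorm (X - Xstar) ^ 2 ≤ 2 / δ * (f X - f Xstar) := by
  intro X hX
  have hXs : X.IsSymm := hX.1
  have hXstarS : Xstar.IsSymm := hXstarMem.1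
  set G := grad Xstar with hGdef
  have hG : G.IsHermitian := isHermitian_of_isSymm (hgradSymm Xstar)
  set μ : Fin n → ℝ := hG.eigenvalues ∘ ⇑(Tuple.sort hG.eigenvalues) with hμdef
  have hμ : Monotone μ := Tuple.monotone_sort hG.eigenvalues
  obtain ⟨V, hV, hV', hGspec⟩ := spectral_sorted hG
  have hδ0 : (0:ℝ) ≤ δ := le_of_lt hδ
  have hkm1 : k - 1 < n := by omega
  have hgap' : δ ≤ μ ⟨k, hkn⟩ - μ ⟨k-1, by omega⟩ := by
    have e1 : eigval G (n - k) = μ ⟨k, hkn⟩ := eigval_sorted hG hkn (by omega)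
    have e2 : eigval G (n - k + 1) = μ ⟨k-1, hkm1⟩ := eigval_sorted hG hkm1 (by omega)
    rw [e1, e2] at hgap
    exact hgap
  set P := V * Matrix.diagonal (dind n k) * Vᵀ with hPdef
  have hPmem : P ∈ Fantope n k := P_mem_Fantope hV hV' (le_of_lt hkn)
  have hPs : P.IsSymm := hPmem.1
  have hkeyX := key_ineq hV hV' hk hkn hμ hGspec hδ0 hgap' hX
  have hkeyS := key_ineq hV hV' hk hkn hμ hGspec hδ0 hgap' hXstarMem
  -- first-order optimality: 0 ≤ tr(G * (P - Xstar))
  have hPXs : (P - Xstar).IsSymm := by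
    rw [Matrix.IsSymm, Matrix.transpose_sub, hPs, hXstarS]
  have hfo : 0 ≤ (G * (P - Xstar)).trace := by
    set M := P - Xstar with hM
    set c := (G * M).trace with hc
    set R := β * frobNorm M ^ 2 with hR
    have hRnn : 0 ≤ R := by
      have := frobNorm_nonneg M
      positivity
    have hforall : ∀ t : ℝ, 0 < t → t ≤ 1 → -(t * R) ≤ c := by
      intro t ht ht1
      set Z := Xstar + t • M with hZ
      have hZmem : Z ∈ Fantope n k := fantope_convex_pt hXstarMem hPmem (le_of_lt ht) ht1
      have hZs : Z.IsSymm := hZmem.1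
      have hconvZ := hconv Z Xstar hZs hXstarS
      have hopt := hXstarOpt Z hZmem
      have h1 : (grad Z * (Xstar - Z)).trace ≤ 0 := by linarith
      have hXsZ : Xstar - Z = (-t) • M := by
        rw [hZ]; ext i j
        simp only [Matrix.sub_apply, Matrix.add_apply, Matrix.smul_apply, smul_eq_mul]
        ring
      have h2 : 0 ≤ (grad Z * M).trace := by
        rw [hXsZ, Matrix.mul_smul, Matrix.trace_smul, smul_eq_mul] at h1
        nlinarith
      have h3 : c = (grad Z * M).trace + ((G - grad Z) * M).trace := by
        rw [hc, ← Matrix.trace_add, ← Matrix.add_mul]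
        congr 2
        abel
      have h4 : -(frobNorm (G - grad Z) * frobNorm M) ≤ ((G - grad Z) * M).trace := by
        rw [trace_mul_symm _ _ hPXs]
        exact frob_cauchy _ _
      have h5 : frobNorm (G - grad Z) ≤ β * (t * frobNorm M) := by
        have hsm := hsmooth Xstar Z hXstarS hZs
        have hXZ : Xstar - Z = -(t • M) := by rw [hXsZ, neg_smul]
        rw [hXZ, frobNorm_neg, frobNorm_smul t (le_of_lt ht)] at hsm
        exact hsm
      have h6 : frobNorm (G - grad Z) * frobNorm M ≤ t * R := by
        have := mul_le_mul_of_nonneg_right h5 (frobNorm_nonneg M)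
        rw [hR]
        nlinarith
      linarith
    by_contra hneg
    push_neg at hneg
    rcases eq_or_lt_of_le hRnn with hR0 | hRpos
    · have := hforall 1 one_pos le_rfl
      rw [← hR0] at this
      simp at this
      linarith
    · have ht2 : 0 < -c / (2 * R) := div_pos (by linarith) (by linarith)
      set t := min 1 (-c / (2 * R)) with htdef
      have htpos : 0 < t := lt_min one_pos ht2
      have ht1 : t ≤ 1 := min_le_left _ _
      have hle := hforall t htpos ht1
      have htle : t ≤ -c / (2 * R) := min_le_right _ _
      have : t * R ≤ (-c / (2 * R)) * R := mul_le_mul_of_nonneg_right htle hRnn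
      have hcalc : (-c / (2 * R)) * R = -c / 2 := by field_simp
      nlinarith
  -- hence Xstar = P
  have hXstarP : Xstar = P := by
    have htneg : (G * (Xstar - P)).trace = -(G * (P - Xstar)).trace := by
      have : Xstar - P = -(P - Xstar) := by ext i j; simp
      rw [this, Matrix.mul_neg, Matrix.trace_neg]
    have hle : (G * (Xstar - P)).trace ≤ 0 := by rw [htneg]; linarith
    have h0 : δ/2 * frobNorm (Xstar - P) ^ 2 ≤ 0 := le_trans hkeyS hle
    have hfz : frobNorm (Xstar - P) ^ 2 ≤ 0 := by nlinarith [sq_nonneg (frobNorm (Xstar - P))]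
    have := frobNorm_eq_zero hfz
    have := sub_eq_zero.mp this
    exact this
  -- conclusion
  have hconvX := hconv Xstar X hXstarS hXs
  have hkeyX' : δ/2 * frobNorm (X - Xstar) ^ 2 ≤ (G * (X - Xstar)).trace := by
    rw [hXstarP]; exact hkeyX
  have hub : (G * (X - Xstar)).trace ≤ f X - f Xstar := by linarith
  have hchain : δ/2 * frobNorm (X - Xstar) ^ 2 ≤ f X - f Xstar := le_trans hkeyX' hub
  have h2δ : (2/δ) * (δ/2 * frobNorm (X - Xstar) ^ 2) = frobNorm (X - Xstar) ^ 2 := by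
    field_simp
  calc frobNorm (X - Xstar) ^ 2 = (2/δ) * (δ/2 * frobNorm (X - Xstar) ^ 2) := h2δ.symm
    _ ≤ 2/δ * (f X - f Xstar) := by
        apply mul_le_mul_of_nonneg_left hchain
        positivity
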